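/- arXiv:2002.01532 — 3 statements merged into one kernel-verified Lean document; each statement's English description precedes it below -/
import Mathlib

section
/- Every derivation on a C*-algebra A of bounded operators on a Hilbert space H that contains all compact operators on H is spatial: there exists a bounded operator d on H such that δ(a) = ad - da for all a in A. -/
set_option maxHeartbeats 1000000

open ContinuousLinearMap

/-- Every (bounded) derivation on a concrete C*-algebra `A ⊆ B(H)` containing all
compact operators is spatial: there is `d ∈ B(H)` with `δ(a) = a d - d a` for all `a ∈ A`. -/
theorem derivation_spatial_of_contains_compacts
    {H : Type*} [NormedAddCommGroup H] [InnerProductSpace ℂ H] [CompleteSpace H]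
    (A : StarSubalgebra ℂ (H →L[ℂ] H)) (hA : IsClosed (A : Set (H →L[ℂ] H)))
    (hK : ∀ k : H →L[ℂ] H, IsCompactOperator k → k ∈ A)
    (δ : A →L[ℂ] A)
    (hδ : ∀ a b : A, δ (a * b) = a * δ b + δ a * b) :
    ∃ d : H →L[ℂ] H, ∀ a : A, (δ a : H →L[ℂ] H) = (a : H →L[ℂ] H) * d - d * (a : H →L[ℂ] H) := by
  rcases subsingleton_or_nontrivial H with hH | hH
  · exact ⟨0, fun a => Subsingleton.elim _ _⟩
  obtain ⟨x₀, hx₀⟩ := exists_ne (0 : H)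
  set ξ : H := ‖x₀‖⁻¹ • x₀ with hξdef
  have hξ : ‖ξ‖ = 1 := by
    simp [hξdef, norm_smul, inv_mul_cancel₀ (norm_ne_zero_iff.mpr hx₀)]
  have hinner : (inner ℂ ξ ξ : ℂ) = 1 := by
    rw [inner_self_eq_norm_sq_to_K, hξ]; norm_num
  -- rank one operator
  set T : H → (H →L[ℂ] H) := fun x => (innerSL ℂ ξ).smulRight x with hT
  have hTapp : ∀ x y, T x y = (inner ℂ ξ y : ℂ) • x := fun x y => rfl
  have hTcompact : ∀ x, IsCompactOperator (T x) := by
    intro x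
    refine ⟨(fun c : ℂ => c • x) '' Metric.closedBall 0 1,
      ((isCompact_closedBall 0 1).image (continuous_id.smul continuous_const)), ?_⟩
    have h1 : (innerSL ℂ ξ) ⁻¹' Metric.closedBall 0 1 ∈ nhds (0 : H) := by
      apply (innerSL ℂ ξ).continuous.continuousAt.preimage_mem_nhds
      simp [Metric.closedBall_mem_nhds]
    filter_upwards [h1] with y hy
    exact ⟨(inner ℂ ξ y : ℂ), hy, rfl⟩
  have hTnorm : ∀ x, ‖T x‖ ≤ ‖x‖ := by
    intro x
    rw [hT]
    calc ‖(innerSL ℂ ξ).smulRight x‖ = ‖innerSL ℂ ξ‖ * ‖x‖ := norm_smulRight_apply _ _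
    _ ≤ ‖x‖ := by rw [innerSL_apply_norm, hξ, one_mul]
  -- the map into A
  set L : H →ₗ[ℂ] A :=
    { toFun := fun x => ⟨T x, hK _ (hTcompact x)⟩
      map_add' := by
        intro x y; apply Subtype.ext; ext z
        simp [hTapp, smul_add]
      map_smul' := by
        intro c x; apply Subtype.ext; ext z
        simp [hTapp, smul_comm c] } with hL
  -- the implementing operator (before sign flip)
  set d₀ : H →ₗ[ℂ] H :=
    { toFun := fun x => (δ (L x) : H →L[ℂ] H) ξ
      map_add' := by intro x y; simp
      map_smul' := by intro c x; simp } with hd₀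
  have hd₀cont : ∀ x, ‖d₀ x‖ ≤ ‖δ‖ * ‖x‖ := by
    intro x
    calc ‖(δ (L x) : H →L[ℂ] H) ξ‖ ≤ ‖(δ (L x) : H →L[ℂ] H)‖ * ‖ξ‖ := le_opNorm _ _
    _ = ‖δ (L x)‖ := by rw [hξ, mul_one]; rfl
    _ ≤ ‖δ‖ * ‖L x‖ := δ.le_opNorm _
    _ ≤ ‖δ‖ * ‖x‖ := by
        apply mul_le_mul_of_nonneg_left _ (norm_nonneg δ)
        exact hTnorm x
  set D : H →L[ℂ] H := LinearMap.mkContinuous d₀ ‖δ‖ hd₀cont with hD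
  refine ⟨-D, fun a => ?_⟩
  ext x
  have key : a * L x = L ((a : H →L[ℂ] H) x) := by
    apply Subtype.ext; ext y
    show (a : H →L[ℂ] H) (T x y) = T ((a : H →L[ℂ] H) x) y
    simp [hTapp]
  have h := hδ a (L x)
  rw [key] at h
  have hTxξ : T x ξ = x := by rw [hTapp, hinner, one_smul]
  have h2 : (δ (L ((a : H →L[ℂ] H) x)) : H →L[ℂ] H) ξ
      = (a : H →L[ℂ] H) ((δ (L x) : H →L[ℂ] H) ξ) + (δ a : H →L[ℂ] H) x := by
    rw [h]
    show ((a : H →L[ℂ] H) * (δ (L x) : H →L[ℂ] H) + (δ a : H →L[ℂ] H) * (L x : H →L[ℂ] H)) ξ = _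
    rw [ContinuousLinearMap.add_apply, ContinuousLinearMap.mul_apply,
      ContinuousLinearMap.mul_apply]
    congr 1
    exact congrArg _ hTxξ
  -- h2 : d₀ (a x) = a (d₀ x) + δ a x
  have hDx : ∀ y, D y = (δ (L y) : H →L[ℂ] H) ξ := fun y => rfl
  show (δ a : H →L[ℂ] H) x = ((a : H →L[ℂ] H) * (-D) - (-D) * (a : H →L[ℂ] H)) x
  simp only [ContinuousLinearMap.sub_apply, ContinuousLinearMap.mul_apply,
    ContinuousLinearMap.neg_apply, map_neg]
  rw [hDx, hDx]
  rw [h2]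
  abel
end

section
/- Let Φ : ℓ∞(G, B(H)) → B(H) be the extension of an invariant mean on an amenable discrete group G via the duality B(H) = (L¹(H))*. Then Φ is a bimodule map over B(H): for every a ∈ ℓ∞(G, B(H)) and every c ∈ B(H), one has c·Φ(a) = Φ(g ↦ c·a(g)) and Φ(a)·c = Φ(g ↦ a(g)·c). -/
open scoped ComplexInnerProductSpace

/-- The averaging map `Φ` on `ℓ∞(G, B(H))` coming from an invariant mean (via the duality
with trace-class operators, here expressed through its pairing with vector states) is a
bimodule map over `B(H)`: `c Φ(a) = Φ(g ↦ c a(g))` and `Φ(a) c = Φ(g ↦ a(g) c)`. -/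
theorem averaging_is_bimodule_map
    (G : Type*) [Group G] {H : Type*} [NormedAddCommGroup H] [InnerProductSpace ℂ H]
    [CompleteSpace H]
    (μ : (G → ℂ) →ₗ[ℂ] ℂ)
    (hμ1 : μ (fun _ => (1 : ℂ)) = 1)
    (hμc : ∀ (f : G → ℂ) (C : ℝ), (∀ g, ‖f g‖ ≤ C) → ‖μ f‖ ≤ C)
    (hμinv : ∀ (f : G → ℂ), (∃ C, ∀ h, ‖f h‖ ≤ C) → ∀ g : G, μ (fun h => f (h * g)) = μ f)
    (Φ : (G → (H →L[ℂ] H)) → (H →L[ℂ] H))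
    (hΦ : ∀ a : G → (H →L[ℂ] H), (∃ C, ∀ g, ‖a g‖ ≤ C) →
      ∀ ξ η : H, ⟪η, Φ a ξ⟫ = μ (fun g => ⟪η, a g ξ⟫)) :
    ∀ (a : G → (H →L[ℂ] H)) (c : H →L[ℂ] H), (∃ C, ∀ g, ‖a g‖ ≤ C) →
      c * Φ a = Φ (fun g => c * a g) ∧ Φ a * c = Φ (fun g => a g * c) := by
  intro a c hb
  obtain ⟨C, hC⟩ := hb
  have hbc : ∃ C, ∀ g, ‖c * a g‖ ≤ C := by
    refine ⟨‖c‖ * max C 0, fun g => ?_⟩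
    calc ‖c * a g‖ ≤ ‖c‖ * ‖a g‖ := norm_mul_le _ _
      _ ≤ ‖c‖ * max C 0 := by
        gcongr
        exact le_max_of_le_left (hC g)
  have hcb : ∃ C, ∀ g, ‖a g * c‖ ≤ C := by
    refine ⟨max C 0 * ‖c‖, fun g => ?_⟩
    calc ‖a g * c‖ ≤ ‖a g‖ * ‖c‖ := norm_mul_le _ _
      _ ≤ max C 0 * ‖c‖ := by
        gcongr
        exact le_max_of_le_left (hC g)
  constructor
  · ext ξ
    apply ext_inner_left ℂ
    intro η
    have h1 : ⟪η, (c * Φ a) ξ⟫ = ⟪ContinuousLinearMap.adjoint c η, Φ a ξ⟫ := by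
      simp [ContinuousLinearMap.mul_apply, ContinuousLinearMap.adjoint_inner_left]
    rw [h1, hΦ a ⟨C, hC⟩, hΦ _ hbc ξ η]
    congr 1
    funext g
    simp [ContinuousLinearMap.mul_apply, ContinuousLinearMap.adjoint_inner_left]
  · ext ξ
    apply ext_inner_left ℂ
    intro η
    have h1 : ⟪η, (Φ a * c) ξ⟫ = ⟪η, Φ a (c ξ)⟫ := rfl
    rw [h1, hΦ a ⟨C, hC⟩, hΦ _ hcb ξ η]
    rfl
end

section
/- Let X be a metric space and r ≥ 0. If a ∈ ℓ∞(G, B(ℓ²(X))) is such that every operator a(g) has propagation at most r, then Φ(a) also has propagation at most r, where Φ is the averaging map coming from an invariant mean on the discrete group G. -/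
open scoped ComplexInnerProductSpace

noncomputable section

abbrev L2 (X : Type*) := lp (fun _ : X => ℂ) 2

def dvec {X : Type*} [DecidableEq X] (x : X) : L2 X := lp.single 2 x 1

def entry {X : Type*} [DecidableEq X] (a : L2 X →L[ℂ] L2 X) (x y : X) : ℂ :=
  ⟪dvec x, a (dvec y)⟫

def HasPropLE {X : Type*} [MetricSpace X] [DecidableEq X]
    (a : L2 X →L[ℂ] L2 X) (r : ℝ) : Prop :=
  ∀ x y : X, r < dist x y → entry a x y = 0

def RoeSet (X : Type*) [MetricSpace X] [DecidableEq X] : Set (L2 X →L[ℂ] L2 X) :=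
  closure {a | ∃ r : ℝ, 0 ≤ r ∧ HasPropLE a r}

def BddGeom (X : Type*) [MetricSpace X] : Prop :=
  ∀ r : ℝ, ∃ N : ℕ, ∀ x : X, (Metric.closedBall x r).Finite ∧ (Metric.closedBall x r).ncard ≤ N

/-- Averaging over an invariant mean does not increase propagation: if every `a(g)` has
propagation at most `r`, then so does `Φ(a)`. -/
theorem averaging_preserves_propagation
    (G : Type*) [Group G] (X : Type*) [MetricSpace X] [DecidableEq X]
    (μ : (G → ℂ) →ₗ[ℂ] ℂ)
    (hμ1 : μ (fun _ => (1 : ℂ)) = 1)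
    (hμc : ∀ (f : G → ℂ) (C : ℝ), (∀ g, ‖f g‖ ≤ C) → ‖μ f‖ ≤ C)
    (hμinv : ∀ (f : G → ℂ), (∃ C, ∀ h, ‖f h‖ ≤ C) → ∀ g : G, μ (fun h => f (h * g)) = μ f)
    (Φ : (G → (L2 X →L[ℂ] L2 X)) → (L2 X →L[ℂ] L2 X))
    (hΦ : ∀ a : G → (L2 X →L[ℂ] L2 X), (∃ C, ∀ g, ‖a g‖ ≤ C) →
      ∀ ξ η : L2 X, ⟪η, Φ a ξ⟫ = μ (fun g => ⟪η, a g ξ⟫))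
    (r : ℝ) (hr : 0 ≤ r)
    (a : G → (L2 X →L[ℂ] L2 X)) (ha : ∃ C, ∀ g, ‖a g‖ ≤ C)
    (hprop : ∀ g : G, HasPropLE (a g) r) :
    HasPropLE (Φ a) r := by
  intro x y hd
  have h := hΦ a ha (dvec y) (dvec x)
  have hz : (fun g => ⟪dvec x, a g (dvec y)⟫) = (0 : G → ℂ) := by
    funext g
    exact hprop g x y hd
  simpa [entry, hz] using h
end
end
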